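/- Let N ≥ 1 and L ≥ 1 be integers and let p_min, q_min be positive reals with q_min·( p_min + p_min²·L(L−1)/2 ) > 0. If N(N−1) > 1 / ( q_min·( p_min + p_min²·L(L−1)/2 ) ), then for any (p_{n,k}) with p_{n,k} ≥ p_min and ∑_{k=1}^L p_{n,k} = 1 for every n, and any (q_n) with q_n ≥ q_min for every n, one has ∑_{n=1}^N q_n · ∑_{k=1}^L p_{n,k} · (∑_{m ≠ n} ∑_{l=k}^L p_{m,l}) > 1; consequently, for any real β with 0 < β and βN < 1, ε = β·( ∑_{n=1}^N q_n ∑_{k=1}^L p_{n,k} (∑_{m ≠ n} ∑_{l=k}^L p_{m,l}) − 1 ) / (1 − βN) > 0. -/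

import Mathlib

lemma gauss_aux (n : ℕ) : ∑ i ∈ Finset.range n, (i:ℝ) = (n:ℝ)*((n:ℝ)-1)/2 := by
  induction n with
  | zero => simp
  | succ m ih => rw [Finset.sum_range_succ, ih]; push_cast; ring

lemma count_aux (L : ℕ) (hL : 1 ≤ L) :
    ∑ k : Fin L, (((Finset.Ioi k).card : ℕ) : ℝ) = (L:ℝ)*((L:ℝ)-1)/2 := by
  have h1 : ∀ k : Fin L, ((Finset.Ioi k).card : ℝ) = (L:ℝ) - 1 - k := by
    intro k
    rw [Fin.card_Ioi]
    have hk : k.val ≤ L - 1 := Nat.le_sub_one_of_lt k.isLt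
    push_cast [Nat.cast_sub hk, Nat.cast_sub hL]
    ring
  simp_rw [h1]
  rw [Finset.sum_sub_distrib]
  rw [Fin.sum_univ_eq_sum_range (fun i => (i:ℝ)), gauss_aux]
  simp [Finset.card_univ]
  ring

/-- Theorem 4 of the paper: if `N(N−1) > 1/(q_min·(p_min + p_min²·L(L−1)/2))`, then for
heterogeneous channels with `p_{n,k} ≥ p_min`, `∑_k p_{n,k} = 1`, and `q_n ≥ q_min`, the
expected number of non-reporting users exceeds `1`, and hence for any `β` with `0 < β`
and `βN < 1`, `ε = β(E[M]−1)/(1−βN) > 0`. -/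
theorem stmt_11 (N L : ℕ) (hN : 1 ≤ N) (hL : 1 ≤ L)
    (pmin qmin : ℝ) (hpmin : 0 < pmin) (hqmin : 0 < qmin)
    (hpos : 0 < qmin * (pmin + pmin ^ 2 * ((L : ℝ) * ((L : ℝ) - 1) / 2)))
    (hcond : 1 / (qmin * (pmin + pmin ^ 2 * ((L : ℝ) * ((L : ℝ) - 1) / 2)))
      < (N : ℝ) * ((N : ℝ) - 1))
    (p : Fin N → Fin L → ℝ) (hp : ∀ n k, pmin ≤ p n k)
    (hpsum : ∀ n, ∑ k, p n k = 1)
    (q : Fin N → ℝ) (hq : ∀ n, qmin ≤ q n) :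
    (1 < ∑ n, q n * ∑ k, p n k *
          ∑ m ∈ Finset.univ.erase n, ∑ l ∈ Finset.Ici k, p m l) ∧
    (∀ β : ℝ, 0 < β → β * (N : ℝ) < 1 →
      0 < β * ((∑ n, q n * ∑ k, p n k *
            ∑ m ∈ Finset.univ.erase n, ∑ l ∈ Finset.Ici k, p m l) - 1)
          / (1 - β * (N : ℝ))) := by
  set C : ℝ := pmin + pmin ^ 2 * ((L : ℝ) * ((L : ℝ) - 1) / 2) with hCdef
  have hC0 : 0 < C := by nlinarith
  have hpk0 : ∀ n k, 0 ≤ p n k := fun n k => le_trans hpmin.le (hp n k)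
  -- key pairwise bound
  have key : ∀ n m : Fin N, C ≤ ∑ k, p n k * ∑ l ∈ Finset.Ici k, p m l := by
    intro n m
    have hsplit : ∀ k : Fin L, ∑ l ∈ Finset.Ici k, p m l
        = p m k + ∑ l ∈ Finset.Ioi k, p m l := by
      intro k
      rw [← Finset.Ioi_insert, Finset.sum_insert (Finset.notMem_Ioi_self)]
    simp_rw [hsplit, mul_add]
    rw [Finset.sum_add_distrib]
    have hA : pmin ≤ ∑ k, p n k * p m k := by
      calc pmin = pmin * ∑ k, p m k := by rw [hpsum m]; ring
        _ = ∑ k, pmin * p m k := by rw [Finset.mul_sum]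
        _ ≤ ∑ k, p n k * p m k :=
          Finset.sum_le_sum fun k _ => mul_le_mul_of_nonneg_right (hp n k) (hpk0 m k)
    have hB : pmin ^ 2 * ((L : ℝ) * ((L : ℝ) - 1) / 2)
        ≤ ∑ k, p n k * ∑ l ∈ Finset.Ioi k, p m l := by
      have hterm : ∀ k : Fin L,
          pmin * (((Finset.Ioi k).card : ℝ) * pmin)
            ≤ p n k * ∑ l ∈ Finset.Ioi k, p m l := by
        intro k
        have hcard : ((Finset.Ioi k).card : ℝ) * pmin ≤ ∑ l ∈ Finset.Ioi k, p m l := by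
          have := Finset.card_nsmul_le_sum (Finset.Ioi k) (p m) pmin (fun l _ => hp m l)
          simpa [nsmul_eq_mul] using this
        have hc0 : 0 ≤ ((Finset.Ioi k).card : ℝ) * pmin := by positivity
        exact mul_le_mul (hp n k) hcard hc0 (hpk0 n k)
      calc pmin ^ 2 * ((L : ℝ) * ((L : ℝ) - 1) / 2)
          = ∑ k : Fin L, pmin * (((Finset.Ioi k).card : ℝ) * pmin) := by
            simp_rw [show ∀ c : ℝ, pmin * (c * pmin) = pmin ^ 2 * c by intro c; ring]
            rw [← Finset.mul_sum, count_aux L hL]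
        _ ≤ _ := Finset.sum_le_sum fun k _ => hterm k
    calc C = pmin + pmin ^ 2 * ((L : ℝ) * ((L : ℝ) - 1) / 2) := hCdef
      _ ≤ _ := add_le_add hA hB
  -- per-user bound
  have inner : ∀ n : Fin N, ((N : ℝ) - 1) * C
      ≤ ∑ k, p n k * ∑ m ∈ Finset.univ.erase n, ∑ l ∈ Finset.Ici k, p m l := by
    intro n
    have hswap : ∑ k, p n k * ∑ m ∈ Finset.univ.erase n, ∑ l ∈ Finset.Ici k, p m l
        = ∑ m ∈ Finset.univ.erase n, ∑ k, p n k * ∑ l ∈ Finset.Ici k, p m l := by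
      simp_rw [Finset.mul_sum]
      exact Finset.sum_comm
    rw [hswap]
    have hcarde : ((Finset.univ.erase n).card : ℝ) = (N : ℝ) - 1 := by
      rw [Finset.card_erase_of_mem (Finset.mem_univ n), Finset.card_univ, Fintype.card_fin]
      rw [Nat.cast_sub hN, Nat.cast_one]
    calc ((N : ℝ) - 1) * C = ((Finset.univ.erase n).card : ℝ) * C := by rw [hcarde]
      _ ≤ ∑ m ∈ Finset.univ.erase n, ∑ k, p n k * ∑ l ∈ Finset.Ici k, p m l := by
          have := Finset.card_nsmul_le_sum (Finset.univ.erase n)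
            (fun m => ∑ k, p n k * ∑ l ∈ Finset.Ici k, p m l) C (fun m _ => key n m)
          simpa [nsmul_eq_mul] using this
  have hN1C : 0 ≤ ((N : ℝ) - 1) * C := by
    have : (1 : ℝ) ≤ (N : ℝ) := by exact_mod_cast hN
    nlinarith
  have main : (N : ℝ) * (qmin * (((N : ℝ) - 1) * C))
      ≤ ∑ n, q n * ∑ k, p n k * ∑ m ∈ Finset.univ.erase n, ∑ l ∈ Finset.Ici k, p m l := by
    have hterm : ∀ n : Fin N, qmin * (((N : ℝ) - 1) * C)
        ≤ q n * ∑ k, p n k * ∑ m ∈ Finset.univ.erase n, ∑ l ∈ Finset.Ici k, p m l :=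
      fun n => mul_le_mul (hq n) (inner n) hN1C (le_trans hqmin.le (hq n))
    calc (N : ℝ) * (qmin * (((N : ℝ) - 1) * C))
        = ∑ _n : Fin N, qmin * (((N : ℝ) - 1) * C) := by
          rw [Finset.sum_const, Finset.card_univ, Fintype.card_fin, nsmul_eq_mul]
      _ ≤ _ := Finset.sum_le_sum fun n _ => hterm n
  have hgt : 1 < (N : ℝ) * ((N : ℝ) - 1) * (qmin * C) := by
    have := (div_lt_iff₀ hpos).mp hcond
    linarith
  have first : 1 < ∑ n, q n * ∑ k, p n k *
      ∑ m ∈ Finset.univ.erase n, ∑ l ∈ Finset.Ici k, p m l := by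
    nlinarith [main, hgt]
  refine ⟨first, fun β hβ hβN => ?_⟩
  apply div_pos (mul_pos hβ (by linarith)) (by linarith)
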